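/- Suppose the whole state space X is an LD-set for Q, with constants ε⁻_X, ε⁺_X, and set ρ_X := 1 − (ε⁻_X/ε⁺_X)². Then for any initial probability measures ν and ν' and any observation sequence y_{0:n} for which both filtering distributions are well defined, ‖φ_{ν,n}[y_{0:n}] − φ_{ν',n}[y_{0:n}]‖_TV ≤ ρ_X^n. -/

import Mathlib

open MeasureTheory ProbabilityTheory Filter
open scoped ENNReal

/-- A set `C` is a local Doeblin (LD) set for the kernel `Q`, with minorizing/majorizing
measure `lam` and constants `em, ep`. -/
def IsLDSet {X : Type*} [MeasurableSpace X] (Q : Kernel X X) (C : Set X)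
    (lam : Measure X) (em ep : ℝ) : Prop :=
  MeasurableSet C ∧ 0 < lam C ∧ 0 < em ∧ 0 < ep ∧
    ∀ x ∈ C, ∀ A : Set X, MeasurableSet A →
      ENNReal.ofReal em * lam (A ∩ C) ≤ Q x (A ∩ C) ∧
        Q x (A ∩ C) ≤ ENNReal.ofReal ep * lam (A ∩ C)

/-- `QV(x) = ∫ V dQ(x,·)` for a drift function `V`. -/
noncomputable def kernelV {X : Type*} [MeasurableSpace X] (Q : Kernel X X) (V : X → ℝ)
    (x : X) : ℝ≥0∞ :=
  ∫⁻ x', ENNReal.ofReal (V x') ∂(Q x)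

/-- `Υ_A(y) = sup_{x ∈ A} g(x,y) QV(x)/V(x)`. -/
noncomputable def Ups {X Y : Type*} [MeasurableSpace X] (Q : Kernel X X)
    (g : X → Y → ℝ) (V : X → ℝ) (A : Set X) (y : Y) : ℝ≥0∞ :=
  ⨆ x ∈ A, ENNReal.ofReal (g x y) * kernelV Q V x / ENNReal.ofReal (V x)

/-- `Ψ_D(y) = λ_D(g(·,y) 1_D)`. -/
noncomputable def Psi {X Y : Type*} [MeasurableSpace X] (g : X → Y → ℝ)
    (lam : Measure X) (D : Set X) (y : Y) : ℝ≥0∞ :=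
  ∫⁻ x in D, ENNReal.ofReal (g x y) ∂lam

/-- `Φ_{ν,D}(y₀,y₁) = ν[g(·,y₀) Q (g(·,y₁) 1_D)]`. -/
noncomputable def Phi {X Y : Type*} [MeasurableSpace X] (Q : Kernel X X)
    (g : X → Y → ℝ) (ν : Measure X) (D : Set X) (y0 y1 : Y) : ℝ≥0∞ :=
  ∫⁻ x0, ENNReal.ofReal (g x0 y0) * ∫⁻ x1 in D, ENNReal.ofReal (g x1 y1) ∂(Q x0) ∂ν

/-- The unnormalized filtering measures: `filtSeq Q g ν y n` has total mass
`∫ ν(dx₀) g(x₀,y₀) ∏_{i=1}^n Q(x_{i−1},dx_i) g(x_i,y_i)`. -/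
noncomputable def filtSeq {X Y : Type*} [MeasurableSpace X] (Q : Kernel X X)
    (g : X → Y → ℝ) (ν : Measure X) (y : ℕ → Y) : ℕ → Measure X
  | 0 => ν.withDensity (fun x => ENNReal.ofReal (g x (y 0)))
  | n + 1 => ((filtSeq Q g ν y n).bind (fun x => Q x)).withDensity
      (fun x => ENNReal.ofReal (g x (y (n + 1))))

/-- The filtering distribution `φ_{ν,n}[y_{0:n}]` (normalized version of `filtSeq`). -/
noncomputable def filt {X Y : Type*} [MeasurableSpace X] (Q : Kernel X X)
    (g : X → Y → ℝ) (ν : Measure X) (y : ℕ → Y) (n : ℕ) : Measure X :=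
  (filtSeq Q g ν y n Set.univ)⁻¹ • filtSeq Q g ν y n

/-- The total variation distance between two (finite) measures,
`sup_A |μ(A) − ν(A)|` over measurable sets `A`. -/
noncomputable def tvDist {X : Type*} [MeasurableSpace X] (μ ν : Measure X) : ℝ :=
  ⨆ A : {S : Set X // MeasurableSet S}, |(μ A.1).toReal - (ν A.1).toReal|

set_option linter.unusedSectionVars false

set_option maxHeartbeats 1000000 in
/-- Key mixing/minorization inequality: if two probability measures both dominate `c • π`
and `h` has oscillation at most `r`, then the integrals differ by at most `(1-c) * r`. -/
lemma mix_le {X : Type*} [MeasurableSpace X] {μ μ' π : Measure X} {c r : ℝ≥0∞}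
    {h : X → ℝ≥0∞}
    (hμu : μ Set.univ = 1) (hμ'u : μ' Set.univ = 1) (hπu : π Set.univ = 1)
    (hle : c • π ≤ μ) (hle' : c • π ≤ μ')
    (hosc : ∀ z z', h z ≤ h z' + r) :
    ∫⁻ z, h z ∂μ ≤ (∫⁻ z, h z ∂μ') + (1 - c) * r := by
  have hne : Nonempty X := by
    by_contra hX
    rw [not_nonempty_iff] at hX
    rw [Set.univ_eq_empty_iff.2 hX, measure_empty] at hμu
    exact zero_ne_one hμu
  have hc1 : c ≤ 1 := by
    have := hle Set.univ
    rw [Measure.smul_apply, smul_eq_mul, hπu, mul_one, hμu] at this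
    exact this
  haveI : IsFiniteMeasure (c • π) := by
    constructor
    rw [Measure.smul_apply, smul_eq_mul, hπu, mul_one]
    exact lt_of_le_of_lt hc1 ENNReal.one_lt_top
  set I := ⨅ z, h z with hI
  have hIr : ∀ z, h z ≤ I + r := by
    intro z
    have h1 : h z ≤ ⨅ z', (h z' + r) := le_iInf fun z' => hosc z z'
    rwa [← ENNReal.iInf_add] at h1
  have hsub : ∀ ρ : Measure X, ρ Set.univ = 1 → c • π ≤ ρ →
      (∫⁻ z, h z ∂ρ = ∫⁻ z, h z ∂(ρ - c • π) + c * ∫⁻ z, h z ∂π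
        ∧ (ρ - c • π) Set.univ = 1 - c) := by
    intro ρ hρ hl
    constructor
    · conv_lhs => rw [← Measure.sub_add_cancel_of_le hl]
      rw [lintegral_add_measure, lintegral_smul_measure, smul_eq_mul]
    · rw [Measure.sub_apply MeasurableSet.univ hl, hρ, Measure.smul_apply, smul_eq_mul,
        hπu, mul_one]
  obtain ⟨hdec, hmass⟩ := hsub μ hμu hle
  obtain ⟨hdec', hmass'⟩ := hsub μ' hμ'u hle'
  have hup : ∫⁻ z, h z ∂(μ - c • π) ≤ (I + r) * (1 - c) := by
    calc ∫⁻ z, h z ∂(μ - c • π) ≤ ∫⁻ _, (I + r) ∂(μ - c • π) := lintegral_mono fun z => hIr z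
    _ = (I + r) * (1 - c) := by rw [lintegral_const, hmass]
  have hdown : I * (1 - c) ≤ ∫⁻ z, h z ∂(μ' - c • π) := by
    calc I * (1 - c) = ∫⁻ _, I ∂(μ' - c • π) := by rw [lintegral_const, hmass']
    _ ≤ ∫⁻ z, h z ∂(μ' - c • π) := lintegral_mono fun z => iInf_le _ z
  calc ∫⁻ z, h z ∂μ = ∫⁻ z, h z ∂(μ - c • π) + c * ∫⁻ z, h z ∂π := hdec
  _ ≤ (I + r) * (1 - c) + c * ∫⁻ z, h z ∂π := add_le_add_left hup _
  _ = (I * (1 - c) + c * ∫⁻ z, h z ∂π) + (1 - c) * r := by ring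
  _ ≤ (∫⁻ z, h z ∂(μ' - c • π) + c * ∫⁻ z, h z ∂π) + (1 - c) * r := by
      exact add_le_add_left (add_le_add_left hdown _) _
  _ = (∫⁻ z, h z ∂μ') + (1 - c) * r := by rw [← hdec']

namespace Stmt6Aux

variable {X : Type*} [MeasurableSpace X]

noncomputable def Rf (Q : Kernel X X) (gE : ℕ → X → ℝ≥0∞) :
    ℕ → ℕ → (X → ℝ≥0∞) → X → ℝ≥0∞
  | _, 0, f => f
  | k, m + 1, f => fun x => ∫⁻ z, gE (k + 1) z * Rf Q gE (k + 1) m f z ∂(Q x)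

variable (Q : Kernel X X) [IsSFiniteKernel Q] (gE : ℕ → X → ℝ≥0∞)

@[simp] lemma Rf_zero (k : ℕ) (f : X → ℝ≥0∞) : Rf Q gE k 0 f = f := rfl

lemma Rf_succ (k m : ℕ) (f : X → ℝ≥0∞) :
    Rf Q gE k (m + 1) f = fun x => ∫⁻ z, gE (k + 1) z * Rf Q gE (k + 1) m f z ∂(Q x) := rfl

noncomputable def Bf (k m : ℕ) : X → ℝ≥0∞ := Rf Q gE k m (fun _ => 1)

lemma measurable_Rf (hg : ∀ k, Measurable (gE k)) :
    ∀ (m k : ℕ) {f : X → ℝ≥0∞}, Measurable f → Measurable (Rf Q gE k m f)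
  | 0, _, _, hf => hf
  | m + 1, k, f, hf => by
      rw [Rf_succ]
      exact Measurable.lintegral_kernel ((hg (k + 1)).mul (measurable_Rf hg m (k + 1) hf))

lemma measurable_Bf (hg : ∀ k, Measurable (gE k)) (k m : ℕ) : Measurable (Bf Q gE k m) :=
  measurable_Rf Q gE hg m k measurable_const

lemma Rf_mono : ∀ (m k : ℕ) {f f' : X → ℝ≥0∞}, (∀ z, f z ≤ f' z) →
    ∀ x, Rf Q gE k m f x ≤ Rf Q gE k m f' x
  | 0, _, _, _, h, x => h x
  | m + 1, k, f, f', h, x => by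
      rw [Rf_succ]
      exact lintegral_mono fun z => mul_le_mul_right (Rf_mono m (k + 1) h z) _

lemma Rf_le_Bf (m k : ℕ) {f : X → ℝ≥0∞} (hf : ∀ z, f z ≤ 1) (x : X) :
    Rf Q gE k m f x ≤ Bf Q gE k m x :=
  Rf_mono Q gE m k hf x

lemma Rf_comp : ∀ (m k : ℕ) (f : X → ℝ≥0∞),
    Rf Q gE k m (fun x => ∫⁻ z, gE (k + m + 1) z * f z ∂(Q x)) = Rf Q gE k (m + 1) f
  | 0, _, _ => rfl
  | m + 1, k, f => by
      rw [Rf_succ, Rf_succ]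
      funext x
      congr 1
      funext z
      congr 1
      have h : k + (m + 1) + 1 = (k + 1) + m + 1 := by omega
      rw [h]
      exact congrFun (Rf_comp m (k + 1) f) z

lemma filtSeq_lintegral {Y : Type*} (Q : Kernel X X) [IsMarkovKernel Q]
    (g : X → Y → ℝ) (y : ℕ → Y)
    (hg : ∀ k, Measurable (fun x => ENNReal.ofReal (g x (y k)))) :
    ∀ (n : ℕ) (ν : Measure X) (f : X → ℝ≥0∞), Measurable f →
      ∫⁻ x, f x ∂(filtSeq Q g ν y n)
        = ∫⁻ x, ENNReal.ofReal (g x (y 0)) *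
            Rf Q (fun k x => ENNReal.ofReal (g x (y k))) 0 n f x ∂ν := by
  intro n
  induction n with
  | zero =>
      intro ν f hf
      rw [filtSeq, lintegral_withDensity_eq_lintegral_mul ν (hg 0) hf]
      rfl
  | succ n ih =>
      intro ν f hf
      rw [filtSeq, lintegral_withDensity_eq_lintegral_mul _ (hg (n + 1)) hf]
      simp only [Pi.mul_apply]
      rw [Measure.lintegral_bind (μ := fun x => Q x) (f := fun a => ENNReal.ofReal (g a (y (n + 1))) * f a) (Kernel.measurable Q).aemeasurable ((hg (n + 1)).mul hf).aemeasurable]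
      rw [ih ν (fun a => ∫⁻ x, ENNReal.ofReal (g x (y (n + 1))) * f x ∂(Q a)) (Measurable.lintegral_kernel ((hg (n + 1)).mul hf))]
      have h0 : (0 : ℕ) + n + 1 = n + 1 := by omega
      have := Rf_comp Q (fun k x => ENNReal.ofReal (g x (y k))) n 0 f
      rw [h0] at this
      rw [this]

/-- The key ENNReal-valued forgetting bound, at the stronger rate `1 - em/ep`. -/
lemma key {Y : Type*} [MeasurableSpace Y]
    (Q : Kernel X X) [IsMarkovKernel Q]
    (g : X → Y → ℝ) (hgmeas : Measurable (Function.uncurry g))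
    (lamX : Measure X) (em ep : ℝ) (hem : 0 < em) (hep : 0 < ep)
    (hQlow : ∀ x, (ENNReal.ofReal em) • lamX ≤ Q x)
    (hQup : ∀ x, (Q x : Measure X) ≤ (ENNReal.ofReal ep) • lamX)
    (ν ν' : Measure X)
    (n : ℕ) (y : ℕ → Y)
    (hwd0 : filtSeq Q g ν y n Set.univ ≠ 0) (hwdT : filtSeq Q g ν y n Set.univ ≠ ⊤)
    (hwd0' : filtSeq Q g ν' y n Set.univ ≠ 0) (hwdT' : filtSeq Q g ν' y n Set.univ ≠ ⊤)
    (A : Set X) (hA : MeasurableSet A) :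
    filt Q g ν y n A ≤ filt Q g ν' y n A
      + (1 - ENNReal.ofReal em / ENNReal.ofReal ep) ^ n := by
  classical
  set gE : ℕ → X → ℝ≥0∞ := fun k x => ENNReal.ofReal (g x (y k)) with hgE_def
  have hgE : ∀ k, Measurable (gE k) := fun k =>
    ENNReal.measurable_ofReal.comp (hgmeas.comp (measurable_id.prodMk measurable_const))
  have hem0 : ENNReal.ofReal em ≠ 0 := (ENNReal.ofReal_pos.2 hem).ne'
  have hep0 : ENNReal.ofReal ep ≠ 0 := (ENNReal.ofReal_pos.2 hep).ne'
  have hemT : ENNReal.ofReal em ≠ ⊤ := ENNReal.ofReal_ne_top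
  have hepT : ENNReal.ofReal ep ≠ ⊤ := ENNReal.ofReal_ne_top
  set c : ℝ≥0∞ := ENNReal.ofReal em / ENNReal.ofReal ep with hc_def
  set ρ : ℝ≥0∞ := 1 - c with hρ_def
  -- lintegral comparisons
  have hLlow : ∀ (w : X → ℝ≥0∞) (x : X),
      ENNReal.ofReal em * ∫⁻ z, w z ∂lamX ≤ ∫⁻ z, w z ∂(Q x) := by
    intro w x
    rw [← smul_eq_mul, ← lintegral_smul_measure]
    exact lintegral_mono' (hQlow x) le_rfl
  have hLup : ∀ (w : X → ℝ≥0∞) (x : X),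
      ∫⁻ z, w z ∂(Q x) ≤ ENNReal.ofReal ep * ∫⁻ z, w z ∂lamX := by
    intro w x
    rw [← smul_eq_mul, ← lintegral_smul_measure]
    exact lintegral_mono' (hQup x) le_rfl
  have hLlow_set : ∀ (w : X → ℝ≥0∞) (s : Set X) (x : X),
      ENNReal.ofReal em * ∫⁻ z in s, w z ∂lamX ≤ ∫⁻ z in s, w z ∂(Q x) := by
    intro w s x
    rw [← smul_eq_mul, ← lintegral_smul_measure, ← Measure.restrict_smul]
    exact lintegral_mono' (Measure.restrict_mono (le_refl s) (hQlow x)) le_rfl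
  -- abbreviations
  set B := Bf Q gE with hB_def
  set P : ℕ → ℝ≥0∞ := fun j => ∫⁻ x, gE j x * B j (n - j) x ∂lamX with hP_def
  have hBsucc : ∀ k m, B k (m + 1) = fun x => ∫⁻ z, gE (k + 1) z * B (k + 1) m z ∂(Q x) :=
    fun k m => rfl
  have hBzero : ∀ k, B k 0 = fun _ => 1 := fun k => rfl
  have hBmeas : ∀ k m, Measurable (B k m) := fun k m => measurable_Bf Q gE hgE k m
  -- pointwise bounds for B in terms of P
  have hBf : ∀ j, j < n → ∀ x,
      ENNReal.ofReal em * P (j + 1) ≤ B j (n - j) x ∧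
        B j (n - j) x ≤ ENNReal.ofReal ep * P (j + 1) := by
    intro j hj x
    have hnj : n - j = (n - (j + 1)) + 1 := by omega
    rw [hnj, hBsucc]
    have hP : P (j + 1) = ∫⁻ z, gE (j + 1) z * B (j + 1) (n - (j + 1)) z ∂lamX := rfl
    rw [hP]
    exact ⟨hLlow _ x, hLup _ x⟩
  -- mass formula
  have hmass : ∀ μ : Measure X,
      filtSeq Q g μ y n Set.univ = ∫⁻ x, gE 0 x * B 0 n x ∂μ := by
    intro μ
    rw [← lintegral_one]
    exact filtSeq_lintegral Q g y hgE n μ (fun _ => 1) measurable_const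
  -- integral bounds combining with a weight
  have hbound : ∀ (μ : Measure X) (j : ℕ), j < n →
      (ENNReal.ofReal em * P (j + 1)) * (∫⁻ x, gE j x ∂μ) ≤
          ∫⁻ x, gE j x * B j (n - j) x ∂μ ∧
        ∫⁻ x, gE j x * B j (n - j) x ∂μ ≤
          (ENNReal.ofReal ep * P (j + 1)) * (∫⁻ x, gE j x ∂μ) := by
    intro μ j hj
    constructor
    · rw [mul_comm, ← lintegral_mul_const _ (hgE j)]
      exact lintegral_mono fun x => mul_le_mul_right (hBf j hj x).1 _
    · rw [mul_comm (ENNReal.ofReal ep * P (j + 1)), ← lintegral_mul_const _ (hgE j)]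
      exact lintegral_mono fun x => mul_le_mul_right (hBf j hj x).2 _
  -- generic positivity propagation
  have hstep : ∀ (M Gv Pn : ℝ≥0∞), M ≠ 0 → M ≠ ⊤ →
      (ENNReal.ofReal em * Pn) * Gv ≤ M → M ≤ (ENNReal.ofReal ep * Pn) * Gv →
      Pn ≠ 0 ∧ Pn ≠ ⊤ := by
    intro M Gv Pn hM0 hMT hlow hup
    have hPn0 : Pn ≠ 0 := by
      rintro rfl
      simp only [mul_zero, zero_mul] at hup
      exact hM0 (le_antisymm hup zero_le)
    have hGv0 : Gv ≠ 0 := by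
      rintro rfl
      simp only [mul_zero] at hup
      exact hM0 (le_antisymm hup zero_le)
    refine ⟨hPn0, ?_⟩
    rintro rfl
    rw [ENNReal.mul_top hem0, ENNReal.top_mul hGv0] at hlow
    exact hMT (top_le_iff.1 hlow)
  -- positivity of the chain constants
  have hPfin : ∀ j, 1 ≤ j → j ≤ n → P j ≠ 0 ∧ P j ≠ ⊤ := by
    intro j
    induction j with
    | zero => omega
    | succ j ihj =>
      intro h1 h2
      rcases Nat.eq_zero_or_pos j with hj0 | hjpos
      · subst hj0
        have hn1 : 0 < n := h2
        have hb := hbound ν 0 hn1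
        rw [Nat.sub_zero] at hb
        rw [hmass ν] at hwd0 hwdT
        exact hstep _ _ _ hwd0 hwdT hb.1 hb.2
      · have hPj := ihj hjpos (by omega)
        have hb := hbound lamX j (by omega)
        have hPj_eq : P j = ∫⁻ x, gE j x * B j (n - j) x ∂lamX := rfl
        rw [← hPj_eq] at hb
        exact hstep _ _ _ hPj.1 hPj.2 hb.1 hb.2
  -- B values are positive and finite along the chain
  have hBin : ∀ m, m ≤ n → ∀ x, B (n - m) m x ≠ 0 ∧ B (n - m) m x ≠ ⊤ := by
    intro m hm x
    cases m with
    | zero => rw [hBzero]; exact ⟨one_ne_zero, ENNReal.one_ne_top⟩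
    | succ m' =>
      have hjlt : n - (m' + 1) < n := by omega
      have hnj : n - (n - (m' + 1)) = m' + 1 := by omega
      have hb := hBf (n - (m' + 1)) hjlt x
      rw [hnj] at hb
      have hPf := hPfin (n - (m' + 1) + 1) (by omega) (by omega)
      constructor
      · intro h0
        rw [h0] at hb
        have := hb.1
        exact hPf.1 (by
          rcases mul_eq_zero.mp (le_antisymm this zero_le) with h | h
          · exact absurd h hem0
          · exact h)
      · intro hT
        rw [hT] at hb
        have := hb.2
        exact ENNReal.mul_ne_top hepT hPf.2 (top_le_iff.1 this)
  -- oscillation bound for the normalized backward quantities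
  have hosc : ∀ m, m ≤ n → ∀ f : X → ℝ≥0∞, Measurable f → (∀ z, f z ≤ 1) → ∀ x x',
      (B (n - m) m x)⁻¹ * Rf Q gE (n - m) m f x ≤
        (B (n - m) m x')⁻¹ * Rf Q gE (n - m) m f x' + ρ ^ m := by
    intro m
    induction m with
    | zero =>
      intro _ f hf hf1 x x'
      rw [hBzero]
      simp only [Rf_zero, inv_one, one_mul, pow_zero]
      exact le_trans (hf1 x) le_add_self
    | succ m ih =>
      intro hm f hf hf1 x x'
      have hmn : m ≤ n := by omega
      have hjm : n - m = (n - (m + 1)) + 1 := by omega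
      set j := n - (m + 1) with hj_def
      have hnj : n - j = m + 1 := by omega
      set h : X → ℝ≥0∞ := fun z => (B (j + 1) m z)⁻¹ * Rf Q gE (j + 1) m f z with hh_def
      have hBm : ∀ z, B (j + 1) m z ≠ 0 ∧ B (j + 1) m z ≠ ⊤ := by
        intro z
        have := hBin m hmn z
        rwa [hjm] at this
      have hosch : ∀ z z', h z ≤ h z' + ρ ^ m := by
        intro z z'
        have := ih hmn f hf hf1 z z'
        rw [hjm] at this
        exact this
      set w : X → ℝ≥0∞ := fun z => gE (j + 1) z * B (j + 1) m z with hw_def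
      have hwmeas : Measurable w := (hgE _).mul (hBmeas _ _)
      have hhmeas : Measurable h :=
        ((hBmeas _ _).inv).mul (measurable_Rf Q gE hgE m (j + 1) hf)
      have hPj : P (j + 1) = ∫⁻ z, w z ∂lamX := by
        have hm' : n - (j + 1) = m := by omega
        have h1 : P (j + 1) = ∫⁻ z, gE (j + 1) z * B (j + 1) (n - (j + 1)) z ∂lamX := rfl
        rw [h1, hm']
      have hPj1 := hPfin (j + 1) (by omega) (by omega)
      have hball : ∀ xx : X, B j (m + 1) xx = ∫⁻ z, w z ∂(Q xx) := fun xx => rfl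
      have hbfacts : ∀ xx : X, B j (m + 1) xx ≠ 0 ∧ B j (m + 1) xx ≠ ⊤ := by
        intro xx
        have := hBin (m + 1) hm xx
        rwa [← hj_def] at this
      have hbub : ∀ xx : X, B j (m + 1) xx ≤ ENNReal.ofReal ep * P (j + 1) := by
        intro xx
        have hjlt : j < n := by omega
        have := (hBf j hjlt xx).2
        rwa [hnj] at this
      set π : Measure X := (P (j + 1))⁻¹ • lamX.withDensity w with hπ_def
      have hπu : π Set.univ = 1 := by
        rw [hπ_def, Measure.smul_apply, smul_eq_mul,
          withDensity_apply _ MeasurableSet.univ, Measure.restrict_univ, ← hPj,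
          ENNReal.inv_mul_cancel hPj1.1 hPj1.2]
      have hμ : ∀ xx : X,
          ((B j (m + 1) xx)⁻¹ • ((Q xx).withDensity w)) Set.univ = 1 ∧
          c • π ≤ ((B j (m + 1) xx)⁻¹ • ((Q xx).withDensity w)) ∧
          ∫⁻ z, h z ∂((B j (m + 1) xx)⁻¹ • ((Q xx).withDensity w))
            = (B j (m + 1) xx)⁻¹ * Rf Q gE j (m + 1) f xx := by
        intro xx
        refine ⟨?_, ?_, ?_⟩
        · rw [Measure.smul_apply, smul_eq_mul, withDensity_apply _ MeasurableSet.univ,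
            Measure.restrict_univ, ← hball xx,
            ENNReal.inv_mul_cancel (hbfacts xx).1 (hbfacts xx).2]
        · refine Measure.le_iff.2 fun s hs => ?_
          have hπs : π s = (P (j + 1))⁻¹ * ∫⁻ z in s, w z ∂lamX := by
            rw [hπ_def, Measure.smul_apply, smul_eq_mul, withDensity_apply _ hs]
          have hμs : ((B j (m + 1) xx)⁻¹ • ((Q xx).withDensity w)) s
              = (B j (m + 1) xx)⁻¹ * ∫⁻ z in s, w z ∂(Q xx) := by
            rw [Measure.smul_apply, smul_eq_mul, withDensity_apply _ hs]
          rw [Measure.smul_apply, smul_eq_mul, hπs, hμs]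
          have h2 : (ENNReal.ofReal ep * P (j + 1))⁻¹ ≤ (B j (m + 1) xx)⁻¹ :=
            ENNReal.inv_le_inv' (hbub xx)
          calc c * ((P (j + 1))⁻¹ * ∫⁻ z in s, w z ∂lamX)
              = (ENNReal.ofReal ep * P (j + 1))⁻¹
                  * (ENNReal.ofReal em * ∫⁻ z in s, w z ∂lamX) := by
                rw [hc_def, div_eq_mul_inv, ENNReal.mul_inv (Or.inl hep0) (Or.inl hepT)]
                ring
            _ ≤ (B j (m + 1) xx)⁻¹ * ∫⁻ z in s, w z ∂(Q xx) :=
                mul_le_mul' h2 (hLlow_set w s xx)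
        · rw [lintegral_smul_measure, smul_eq_mul,
            lintegral_withDensity_eq_lintegral_mul _ hwmeas hhmeas]
          congr 1
          have hwh : ∀ z, (w * h) z = gE (j + 1) z * Rf Q gE (j + 1) m f z := by
            intro z
            simp only [Pi.mul_apply, hw_def, hh_def]
            rw [mul_assoc, ← mul_assoc (B (j + 1) m z),
              ENNReal.mul_inv_cancel (hBm z).1 (hBm z).2, one_mul]
          rw [lintegral_congr hwh]
          rfl
      obtain ⟨hu1, hl1, he1⟩ := hμ x
      obtain ⟨hu2, hl2, he2⟩ := hμ x'
      have hmix := mix_le hu1 hu2 hπu hl1 hl2 hosch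
      rw [he1, he2] at hmix
      calc (B j (m + 1) x)⁻¹ * Rf Q gE j (m + 1) f x
          ≤ (B j (m + 1) x')⁻¹ * Rf Q gE j (m + 1) f x' + (1 - c) * ρ ^ m := hmix
        _ = (B j (m + 1) x')⁻¹ * Rf Q gE j (m + 1) f x' + ρ ^ (m + 1) := by
            rw [← hρ_def, pow_succ]
            ring
  -- final assembly
  have hB0 : ∀ z, B 0 n z ≠ 0 ∧ B 0 n z ≠ ⊤ := by
    have := hBin n le_rfl
    simpa [Nat.sub_self] using this
  set f : X → ℝ≥0∞ := A.indicator 1 with hf_def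
  have hfmeas : Measurable f := measurable_one.indicator hA
  have hf1 : ∀ z, f z ≤ 1 := by
    intro z
    rw [hf_def]
    by_cases hz : z ∈ A
    · rw [Set.indicator_of_mem hz]
      exact le_rfl
    · rw [Set.indicator_of_notMem hz]
      exact zero_le_one
  set h0 : X → ℝ≥0∞ := fun z => (B 0 n z)⁻¹ * Rf Q gE 0 n f z with hh0_def
  have hh0meas : Measurable h0 :=
    ((hBmeas 0 n).inv).mul (measurable_Rf Q gE hgE n 0 hfmeas)
  have hosc0 : ∀ z z', h0 z ≤ h0 z' + ρ ^ n := by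
    intro z z'
    have := hosc n le_rfl f hfmeas hf1 z z'
    rwa [Nat.sub_self] at this
  have hrep : ∀ μ : Measure X, filtSeq Q g μ y n Set.univ ≠ 0 →
      filtSeq Q g μ y n Set.univ ≠ ⊤ →
      ∃ η : Measure X, η Set.univ = 1 ∧ filt Q g μ y n A = ∫⁻ z, h0 z ∂η := by
    intro μ hM0 hMT
    set W : X → ℝ≥0∞ := fun z => gE 0 z * B 0 n z with hW_def
    have hWmeas : Measurable W := (hgE 0).mul (hBmeas 0 n)
    refine ⟨(filtSeq Q g μ y n Set.univ)⁻¹ • μ.withDensity W, ?_, ?_⟩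
    · rw [Measure.smul_apply, smul_eq_mul, withDensity_apply _ MeasurableSet.univ,
        Measure.restrict_univ]
      have hW : ∫⁻ z, W z ∂μ = filtSeq Q g μ y n Set.univ := (hmass μ).symm
      rw [hW, ENNReal.inv_mul_cancel hM0 hMT]
    · rw [lintegral_smul_measure, smul_eq_mul,
        lintegral_withDensity_eq_lintegral_mul _ hWmeas hh0meas]
      have hWh : ∀ z, (W * h0) z = gE 0 z * Rf Q gE 0 n f z := by
        intro z
        simp only [Pi.mul_apply, hW_def, hh0_def]
        rw [mul_assoc, ← mul_assoc (B 0 n z),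
          ENNReal.mul_inv_cancel (hB0 z).1 (hB0 z).2, one_mul]
      rw [lintegral_congr hWh]
      have hseq : filtSeq Q g μ y n A = ∫⁻ x, gE 0 x * Rf Q gE 0 n f x ∂μ := by
        rw [← lintegral_indicator_one hA]
        exact filtSeq_lintegral Q g y hgE n μ f hfmeas
      rw [filt, Measure.smul_apply, smul_eq_mul, hseq]
  obtain ⟨η, hηu, hηe⟩ := hrep ν hwd0 hwdT
  obtain ⟨η', hη'u, hη'e⟩ := hrep ν' hwd0' hwdT'
  have hzle : ∀ κ : Measure X, (0 : ℝ≥0∞) • η' ≤ κ := by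
    intro κ
    rw [zero_smul]
    exact Measure.zero_le κ
  have hmix := mix_le (c := 0) hηu hη'u hη'u (hzle η) (hzle η') hosc0
  rw [tsub_zero, one_mul] at hmix
  rw [hηe, hη'e]
  exact hmix


end Stmt6Aux

/-- Remark after Proposition 5: if the whole state space `X` is an LD-set for
`Q` with constants `ε⁻_X, ε⁺_X`, then for any initial distributions `ν, ν'` and any
observations `y_{0:n}` for which both filtering distributions are well defined,
`‖φ_{ν,n}[y_{0:n}] − φ_{ν',n}[y_{0:n}]‖_TV ≤ ρ_X^n` with `ρ_X = 1 − (ε⁻_X/ε⁺_X)²`. -/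
theorem forgetting_hmm_stmt6 {X Y : Type*} [MeasurableSpace X] [MeasurableSpace Y]
    (Q : Kernel X X) [IsMarkovKernel Q]
    (g : X → Y → ℝ) (hgmeas : Measurable (Function.uncurry g)) (hgnn : ∀ x y, 0 ≤ g x y)
    (lamX : Measure X) (em ep : ℝ) (hX : IsLDSet Q Set.univ lamX em ep)
    (ν ν' : Measure X) [IsProbabilityMeasure ν] [IsProbabilityMeasure ν']
    (n : ℕ) (y : ℕ → Y)
    (hwdν : 0 < filtSeq Q g ν y n Set.univ ∧ filtSeq Q g ν y n Set.univ ≠ ⊤)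
    (hwdν' : 0 < filtSeq Q g ν' y n Set.univ ∧ filtSeq Q g ν' y n Set.univ ≠ ⊤) :
    tvDist (filt Q g ν y n) (filt Q g ν' y n) ≤ (1 - (em / ep) ^ 2) ^ n := by
  classical
  obtain ⟨-, hlam_pos, hem, hep, hQb⟩ := hX
  have hem0 : ENNReal.ofReal em ≠ 0 := (ENNReal.ofReal_pos.2 hem).ne'
  have hQpair : ∀ (x : X) (s : Set X), MeasurableSet s →
      ENNReal.ofReal em * lamX s ≤ Q x s ∧ Q x s ≤ ENNReal.ofReal ep * lamX s := by
    intro x s hs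
    have := hQb x (Set.mem_univ x) s hs
    simpa [Set.inter_univ] using this
  have hQlow : ∀ x, (ENNReal.ofReal em) • lamX ≤ Q x := by
    intro x
    refine Measure.le_iff.2 fun s hs => ?_
    rw [Measure.smul_apply, smul_eq_mul]
    exact (hQpair x s hs).1
  have hQup : ∀ x, (Q x : Measure X) ≤ (ENNReal.ofReal ep) • lamX := by
    intro x
    refine Measure.le_iff.2 fun s hs => ?_
    rw [Measure.smul_apply, smul_eq_mul]
    exact (hQpair x s hs).2
  have hXne : Nonempty X := by
    by_contra hXe
    rw [not_nonempty_iff] at hXe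
    have h1 : (ν : Measure X) Set.univ = 1 := measure_univ
    rw [Set.univ_eq_empty_iff.2 hXe, measure_empty] at h1
    exact zero_ne_one h1
  obtain ⟨x0⟩ := hXne
  have hle1 : ENNReal.ofReal em * lamX Set.univ ≤ 1 := by
    have := (hQpair x0 Set.univ MeasurableSet.univ).1
    rwa [measure_univ (μ := Q x0)] at this
  have h1le : (1 : ℝ≥0∞) ≤ ENNReal.ofReal ep * lamX Set.univ := by
    have := (hQpair x0 Set.univ MeasurableSet.univ).2
    rwa [measure_univ (μ := Q x0)] at this
  have hlamT : lamX Set.univ ≠ ⊤ := by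
    intro hT
    rw [hT, ENNReal.mul_top hem0] at hle1
    exact (by simp : ¬((⊤ : ℝ≥0∞) ≤ 1)) hle1
  have hofle : ENNReal.ofReal em ≤ ENNReal.ofReal ep := by
    have h := le_trans hle1 h1le
    rwa [ENNReal.mul_le_mul_iff_left hlam_pos.ne' hlamT] at h
  have hemep : em ≤ ep := by
    rwa [ENNReal.ofReal_le_ofReal_iff hep.le] at hofle
  set ρ : ℝ≥0∞ := 1 - ENNReal.ofReal em / ENNReal.ofReal ep with hρ_def
  have hkey : ∀ A : Set X, MeasurableSet A →
      filt Q g ν y n A ≤ filt Q g ν' y n A + ρ ^ n ∧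
        filt Q g ν' y n A ≤ filt Q g ν y n A + ρ ^ n := by
    intro A hA
    exact ⟨Stmt6Aux.key Q g hgmeas lamX em ep hem hep hQlow hQup ν ν' n y
        hwdν.1.ne' hwdν.2 hwdν'.1.ne' hwdν'.2 A hA,
      Stmt6Aux.key Q g hgmeas lamX em ep hem hep hQlow hQup ν' ν n y
        hwdν'.1.ne' hwdν'.2 hwdν.1.ne' hwdν.2 A hA⟩
  have hfin : ∀ μ : Measure X, filtSeq Q g μ y n Set.univ ≠ 0 →
      filtSeq Q g μ y n Set.univ ≠ ⊤ → ∀ A : Set X, filt Q g μ y n A ≤ 1 := by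
    intro μ h0 hT A
    have h1 : filt Q g μ y n A ≤ filt Q g μ y n Set.univ :=
      measure_mono (Set.subset_univ A)
    have h2 : filt Q g μ y n Set.univ = 1 := by
      rw [filt, Measure.smul_apply, smul_eq_mul, ENNReal.inv_mul_cancel h0 hT]
    rwa [h2] at h1
  have hdiv1 : em / ep ≤ 1 := (div_le_one hep).2 hemep
  have hdivnn : 0 ≤ em / ep := div_nonneg hem.le hep.le
  have hcle1 : ENNReal.ofReal em / ENNReal.ofReal ep ≤ 1 :=
    ENNReal.div_le_of_le_mul (by simpa using hofle)
  have hρreal : ρ.toReal = 1 - em / ep := by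
    rw [hρ_def, ENNReal.toReal_sub_of_le hcle1 ENNReal.one_ne_top, ENNReal.toReal_one,
      ENNReal.toReal_div, ENNReal.toReal_ofReal hem.le, ENNReal.toReal_ofReal hep.le]
  have hρ1 : ρ ≤ 1 := tsub_le_self
  have hρnT : ρ ^ n ≠ ⊤ :=
    (lt_of_le_of_lt (pow_le_one' hρ1 n) ENNReal.one_lt_top).ne
  have hρn_toReal : (ρ ^ n).toReal ≤ (1 - (em / ep) ^ 2) ^ n := by
    rw [ENNReal.toReal_pow, hρreal]
    exact pow_le_pow_left₀ (by linarith) (by nlinarith) n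
  haveI : Nonempty {S : Set X // MeasurableSet S} := ⟨⟨∅, MeasurableSet.empty⟩⟩
  rw [tvDist]
  refine ciSup_le ?_
  rintro ⟨A, hA⟩
  obtain ⟨h1, h2⟩ := hkey A hA
  have hfA : filt Q g ν y n A ≠ ⊤ :=
    (lt_of_le_of_lt (hfin ν hwdν.1.ne' hwdν.2 A) ENNReal.one_lt_top).ne
  have hfA' : filt Q g ν' y n A ≠ ⊤ :=
    (lt_of_le_of_lt (hfin ν' hwdν'.1.ne' hwdν'.2 A) ENNReal.one_lt_top).ne
  have habs : |(filt Q g ν y n A).toReal - (filt Q g ν' y n A).toReal| ≤ (ρ ^ n).toReal := by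
    rw [abs_sub_le_iff]
    constructor
    · have h3 := ENNReal.toReal_mono (ENNReal.add_ne_top.2 ⟨hfA', hρnT⟩) h1
      rw [ENNReal.toReal_add hfA' hρnT] at h3
      linarith
    · have h3 := ENNReal.toReal_mono (ENNReal.add_ne_top.2 ⟨hfA, hρnT⟩) h2
      rw [ENNReal.toReal_add hfA hρnT] at h3
      linarith
  exact le_trans habs hρn_toReal
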